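/- arXiv:2310.03393 — 2 statements merged into one kernel-verified Lean document; each statement's English description precedes it below -/
import Mathlib

section
/- In the Black–Scholes model, the function u(t, s) = s·e^{−δ(T−t)}Φ(d₁) − K·e^{−R(T−t)}Φ(d₂), with d_{1/2} = (log(s/K) + (R − δ ± b²/2)(T−t))/(b√(T−t)), satisfies the terminal condition lim_{t→T⁻} u(t, s) = max(s − K, 0) for every s > 0, s ≠ K. -/
open Real Filter Topology MeasureTheory Set

/-- The standard normal cumulative distribution function. -/
noncomputable def stdNormalCDF (x : ℝ) : ℝ :=
  ∫ t in Set.Iic x, (Real.sqrt (2 * Real.pi))⁻¹ * Real.exp (-(t ^ 2) / 2)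

/-- `d₁` in the Black–Scholes formula. -/
noncomputable def bsD1 (T K b R δ t s : ℝ) : ℝ :=
  (Real.log (s / K) + (R - δ + b ^ 2 / 2) * (T - t)) / (b * Real.sqrt (T - t))

/-- `d₂` in the Black–Scholes formula. -/
noncomputable def bsD2 (T K b R δ t s : ℝ) : ℝ :=
  (Real.log (s / K) + (R - δ - b ^ 2 / 2) * (T - t)) / (b * Real.sqrt (T - t))

/-- The Black–Scholes price function
`u(t,s) = s e^{−δ(T−t)} Φ(d₁) − K e^{−R(T−t)} Φ(d₂)`. -/
noncomputable def bsPrice (T K b R δ t s : ℝ) : ℝ :=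
  s * Real.exp (-δ * (T - t)) * stdNormalCDF (bsD1 T K b R δ t s)
    - K * Real.exp (-R * (T - t)) * stdNormalCDF (bsD2 T K b R δ t s)

lemma gauss_integrable :
    Integrable (fun t : ℝ => (Real.sqrt (2 * Real.pi))⁻¹ * Real.exp (-(t ^ 2) / 2)) := by
  have h : Integrable (fun t : ℝ => Real.exp (-(1/2 : ℝ) * t ^ 2)) :=
    integrable_exp_neg_mul_sq (by norm_num)
  have := h.const_mul ((Real.sqrt (2 * Real.pi))⁻¹)
  convert this using 3
  ring

lemma gauss_integral :
    ∫ t : ℝ, (Real.sqrt (2 * Real.pi))⁻¹ * Real.exp (-(t ^ 2) / 2) = 1 := by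
  have h := integral_gaussian (1/2 : ℝ)
  have h2 : ∫ t : ℝ, Real.exp (-(t ^ 2) / 2) = Real.sqrt (2 * Real.pi) := by
    have : (fun t : ℝ => Real.exp (-(t ^ 2) / 2)) = fun t : ℝ => Real.exp (-(1/2 : ℝ) * t ^ 2) := by
      funext t; ring_nf
    rw [this, h]
    rw [show (2:ℝ)*Real.pi = Real.pi/(1/2) by ring]
  rw [MeasureTheory.integral_const_mul, h2]
  rw [inv_mul_cancel₀]
  positivity

lemma cdf_tendsto_atTop : Tendsto stdNormalCDF atTop (𝓝 1) := by
  have h := tendsto_setIntegral_of_monotone (μ := volume)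
    (s := fun x : ℝ => Iic x) (f := fun t : ℝ => (Real.sqrt (2 * Real.pi))⁻¹ * Real.exp (-(t ^ 2) / 2))
    (fun i => measurableSet_Iic) (fun a b hab => Iic_subset_Iic.2 hab)
    (by rw [iUnion_Iic]; exact gauss_integrable.integrableOn)
  rw [iUnion_Iic, Measure.restrict_univ, gauss_integral] at h
  exact h

lemma cdf_tendsto_atBot : Tendsto stdNormalCDF atBot (𝓝 0) := by
  have h := tendsto_setIntegral_of_antitone (μ := volume)
    (s := fun x : ℝ => Iic (-x)) (f := fun t : ℝ => (Real.sqrt (2 * Real.pi))⁻¹ * Real.exp (-(t ^ 2) / 2))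
    (fun i => measurableSet_Iic) (fun a b hab => Iic_subset_Iic.2 (by linarith))
    ⟨0, gauss_integrable.integrableOn⟩
  have he : (⋂ x : ℝ, Iic (-x)) = (∅ : Set ℝ) := by
    ext y; simp only [mem_iInter, mem_Iic, mem_empty_iff_false, iff_false, not_forall]
    exact ⟨-(y - 1), by push_neg; linarith⟩
  rw [he] at h
  simp only [Measure.restrict_empty, integral_zero_measure] at h
  have : Tendsto (fun x : ℝ => -x) atBot atTop := tendsto_neg_atBot_atTop
  have h2 := h.comp this
  simp only [Function.comp_def, neg_neg] at h2
  exact h2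

lemma tau_tendsto (T : ℝ) : Tendsto (fun t => T - t) (𝓝[<] T) (𝓝[>] (0:ℝ)) := by
  apply tendsto_nhdsWithin_of_tendsto_nhds_of_eventually_within
  · have : Tendsto (fun t : ℝ => T - t) (𝓝 T) (𝓝 (T - T)) :=
      (continuous_const.sub continuous_id).tendsto T
    simpa using this.mono_left nhdsWithin_le_nhds
  · filter_upwards [self_mem_nhdsWithin] with t ht
    exact sub_pos.2 (Set.mem_Iio.1 ht)

lemma bsqrt_tendsto (T b : ℝ) (hb : 0 < b) :
    Tendsto (fun t => b * Real.sqrt (T - t)) (𝓝[<] T) (𝓝[>] (0:ℝ)) := by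
  apply tendsto_nhdsWithin_of_tendsto_nhds_of_eventually_within
  · have h : Tendsto (fun t : ℝ => b * Real.sqrt (T - t)) (𝓝 T) (𝓝 (b * Real.sqrt (T - T))) :=
      (continuous_const.mul (Real.continuous_sqrt.comp (continuous_const.sub continuous_id))).tendsto T
    simpa using h.mono_left nhdsWithin_le_nhds
  · filter_upwards [self_mem_nhdsWithin] with t ht
    exact mul_pos hb (Real.sqrt_pos.2 (sub_pos.2 (Set.mem_Iio.1 ht)))

lemma d_atTop (T b c L : ℝ) (hb : 0 < b) (hL : 0 < L) :
    Tendsto (fun t => (L + c * (T - t)) / (b * Real.sqrt (T - t))) (𝓝[<] T) atTop := by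
  have h1 : Tendsto (fun t => L * (b * Real.sqrt (T - t))⁻¹) (𝓝[<] T) atTop :=
    (tendsto_inv_nhdsGT_zero.comp (bsqrt_tendsto T b hb)).const_mul_atTop hL
  have h2 : Tendsto (fun t => (c / b) * Real.sqrt (T - t)) (𝓝[<] T) (𝓝 0) := by
    have := (tendsto_const_nhds (x := c / b)).mul
      ((bsqrt_tendsto T 1 one_pos).mono_right nhdsWithin_le_nhds)
    simpa using this
  have h := h1.atTop_add h2
  apply h.congr'
  filter_upwards [self_mem_nhdsWithin] with t ht
  have hτ : 0 < T - t := sub_pos.2 ht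
  have hs : 0 < Real.sqrt (T - t) := Real.sqrt_pos.2 hτ
  have hsq : Real.sqrt (T - t) * Real.sqrt (T - t) = T - t := Real.mul_self_sqrt hτ.le
  field_simp
  linear_combination c * hsq

lemma d_atBot (T b c L : ℝ) (hb : 0 < b) (hL : L < 0) :
    Tendsto (fun t => (L + c * (T - t)) / (b * Real.sqrt (T - t))) (𝓝[<] T) atBot := by
  have h := d_atTop T b (-c) (-L) hb (by linarith)
  have := tendsto_neg_atTop_atBot.comp h
  apply this.congr
  intro t
  simp only [Function.comp_apply]
  rw [← neg_div]
  ring_nf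

lemma exp_fac_tendsto (T a : ℝ) :
    Tendsto (fun t => Real.exp (-a * (T - t))) (𝓝[<] T) (𝓝 1) := by
  have h : Tendsto (fun t : ℝ => Real.exp (-a * (T - t))) (𝓝 T) (𝓝 (Real.exp (-a * (T - T)))) :=
    (Real.continuous_exp.comp (continuous_const.mul (continuous_const.sub continuous_id))).tendsto T
  simpa using h.mono_left nhdsWithin_le_nhds

/-- As `t → T⁻`, the Black–Scholes price converges to the call payoff
`max(s − K, 0)` for every `s > 0` with `s ≠ K`. -/
theorem bsPrice_tendsto_payoff (T K b R δ : ℝ)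
    (hT : 0 < T) (hK : 0 < K) (hb : 0 < b) :
    ∀ s : ℝ, 0 < s → s ≠ K →
      Filter.Tendsto (fun t => bsPrice T K b R δ t s)
        (nhdsWithin T (Set.Iio T)) (nhds (max (s - K) 0)) := by
  intro s hs hne
  have he1 := exp_fac_tendsto T δ
  have he2 := exp_fac_tendsto T R
  rcases lt_or_gt_of_ne hne with hlt | hgt
  · -- s < K
    have hL : Real.log (s / K) < 0 := Real.log_neg (div_pos hs hK) ((div_lt_one hK).2 hlt)
    have hd1 : Tendsto (fun t => bsD1 T K b R δ t s) (𝓝[<] T) atBot := by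
      simpa [bsD1] using d_atBot T b (R - δ + b ^ 2 / 2) (Real.log (s / K)) hb hL
    have hd2 : Tendsto (fun t => bsD2 T K b R δ t s) (𝓝[<] T) atBot := by
      simpa [bsD2] using d_atBot T b (R - δ - b ^ 2 / 2) (Real.log (s / K)) hb hL
    have hΦ1 := cdf_tendsto_atBot.comp hd1
    have hΦ2 := cdf_tendsto_atBot.comp hd2
    have h : Tendsto (fun t => bsPrice T K b R δ t s) (𝓝[<] T)
        (𝓝 (s * 1 * 0 - K * 1 * 0)) :=
      (((tendsto_const_nhds (x := s)).mul he1).mul hΦ1).sub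
        (((tendsto_const_nhds (x := K)).mul he2).mul hΦ2)
    have hmax : max (s - K) 0 = 0 := max_eq_right (by linarith)
    rw [hmax]
    simpa using h
  · -- s > K
    have hL : 0 < Real.log (s / K) := Real.log_pos ((one_lt_div hK).2 hgt)
    have hd1 : Tendsto (fun t => bsD1 T K b R δ t s) (𝓝[<] T) atTop := by
      simpa [bsD1] using d_atTop T b (R - δ + b ^ 2 / 2) (Real.log (s / K)) hb hL
    have hd2 : Tendsto (fun t => bsD2 T K b R δ t s) (𝓝[<] T) atTop := by
      simpa [bsD2] using d_atTop T b (R - δ - b ^ 2 / 2) (Real.log (s / K)) hb hL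
    have hΦ1 := cdf_tendsto_atTop.comp hd1
    have hΦ2 := cdf_tendsto_atTop.comp hd2
    have h : Tendsto (fun t => bsPrice T K b R δ t s) (𝓝[<] T)
        (𝓝 (s * 1 * 1 - K * 1 * 1)) :=
      (((tendsto_const_nhds (x := s)).mul he1).mul hΦ1).sub
        (((tendsto_const_nhds (x := K)).mul he2).mul hΦ2)
    have hmax : max (s - K) 0 = s - K := max_eq_left (by linarith)
    rw [hmax]
    simpa using h
end

section
/- The Black–Scholes function u(t,s) = s e^{−δ(T−t)}Φ(d₁) − K e^{−R(T−t)}Φ(d₂) satisfies ∂u/∂s = e^{−δ(T−t)} Φ(d₁) for all t < T, s > 0. -/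
open Real

/-- The standard normal density. -/
noncomputable def stdNormalPDF (x : ℝ) : ℝ :=
  (Real.sqrt (2 * Real.pi))⁻¹ * Real.exp (-(x ^ 2) / 2)

lemma stdNormalPDF_integrable : MeasureTheory.Integrable stdNormalPDF := by
  have h : MeasureTheory.Integrable fun x : ℝ => Real.exp (-(2⁻¹ : ℝ) * x ^ 2) :=
    integrable_exp_neg_mul_sq (by norm_num)
  have := h.const_mul (Real.sqrt (2 * Real.pi))⁻¹
  refine this.congr ?_
  filter_upwards with x
  unfold stdNormalPDF
  ring_nf

lemma stdNormalPDF_continuous : Continuous stdNormalPDF := by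
  unfold stdNormalPDF
  fun_prop

lemma stdNormalCDF_hasDerivAt (x : ℝ) :
    HasDerivAt stdNormalCDF (stdNormalPDF x) x := by
  have key : ∀ y : ℝ, stdNormalCDF y = (∫ u in (0:ℝ)..y, stdNormalPDF u) + stdNormalCDF 0 := by
    intro y
    have := intervalIntegral.integral_Iic_sub_Iic
      (stdNormalPDF_integrable.integrableOn (s := Set.Iic 0))
      (stdNormalPDF_integrable.integrableOn (s := Set.Iic y)) (μ := MeasureTheory.volume)
    have h2 : stdNormalCDF y = ∫ u in Set.Iic y, stdNormalPDF u := rfl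
    have h3 : stdNormalCDF 0 = ∫ u in Set.Iic (0:ℝ), stdNormalPDF u := rfl
    rw [h2, h3]
    linarith [this]
  have hD : HasDerivAt (fun y => (∫ u in (0:ℝ)..y, stdNormalPDF u) + stdNormalCDF 0)
      (stdNormalPDF x) x := by
    refine HasDerivAt.add_const _ ?_
    exact intervalIntegral.integral_hasDerivAt_right
      (stdNormalPDF_integrable.intervalIntegrable)
      (stdNormalPDF_continuous.stronglyMeasurableAtFilter _ _)
      (stdNormalPDF_continuous.continuousAt)
  exact hD.congr_of_eventuallyEq (Filter.Eventually.of_forall key)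

/-- Black–Scholes delta: `∂u/∂s = e^{−δ(T−t)} Φ(d₁)` for all `t ∈ [0,T)`,
`s > 0`. -/
theorem bsPrice_delta (T K b R δ : ℝ) (hT : 0 < T) (hK : 0 < K) (hb : 0 < b)
    (t : ℝ) (ht0 : 0 ≤ t) (htT : t < T) (s : ℝ) (hs : 0 < s) :
    HasDerivAt (fun x => bsPrice T K b R δ t x)
      (Real.exp (-δ * (T - t)) * stdNormalCDF (bsD1 T K b R δ t s)) s := by
  set τ := T - t with hτdef
  have hτ : 0 < τ := by simp [hτdef]; linarith
  set c := b * Real.sqrt τ with hcdef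
  have hc : 0 < c := mul_pos hb (Real.sqrt_pos.mpr hτ)
  have hc2 : c ^ 2 = b ^ 2 * τ := by
    rw [hcdef, mul_pow, Real.sq_sqrt hτ.le]
  set A := Real.exp (-δ * τ) with hA
  set B := Real.exp (-R * τ) with hB
  -- derivatives of d1, d2 as functions of s
  have hlog : HasDerivAt (fun x : ℝ => Real.log (x / K)) s⁻¹ s := by
    have h1 : HasDerivAt (fun x : ℝ => x / K) (1 / K) s := (hasDerivAt_id s).div_const K
    have h2 := (Real.hasDerivAt_log (by positivity : s / K ≠ 0)).comp s h1
    exact h2.congr_deriv (by field_simp)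
  have hd1 : HasDerivAt (fun x => bsD1 T K b R δ t x) (s⁻¹ / c) s := by
    unfold bsD1
    exact (hlog.add_const _).div_const c
  have hd2 : HasDerivAt (fun x => bsD2 T K b R δ t x) (s⁻¹ / c) s := by
    unfold bsD2
    exact (hlog.add_const _).div_const c
  set d1 := bsD1 T K b R δ t s with hd1def
  set d2 := bsD2 T K b R δ t s with hd2def
  have hΦ1 : HasDerivAt (fun x => stdNormalCDF (bsD1 T K b R δ t x))
      (stdNormalPDF d1 * (s⁻¹ / c)) s := by have := (stdNormalCDF_hasDerivAt d1).comp s hd1; exact this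
  have hΦ2 : HasDerivAt (fun x => stdNormalCDF (bsD2 T K b R δ t x))
      (stdNormalPDF d2 * (s⁻¹ / c)) s := by have := (stdNormalCDF_hasDerivAt d2).comp s hd2; exact this
  have h1 : HasDerivAt (fun x => x * A * stdNormalCDF (bsD1 T K b R δ t x))
      (A * stdNormalCDF d1 + s * A * (stdNormalPDF d1 * (s⁻¹ / c))) s := by
    have := ((hasDerivAt_id s).mul_const A).mul hΦ1
    exact this.congr_deriv (by simp only [id_eq, one_mul]; rfl)
  have h2 : HasDerivAt (fun x => K * B * stdNormalCDF (bsD2 T K b R δ t x))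
      (K * B * (stdNormalPDF d2 * (s⁻¹ / c))) s := hΦ2.const_mul _
  have htotal := h1.sub h2
  -- the key identity : s * A * stdNormalPDF d1 = K * B * stdNormalPDF d2
  have hkey : s * A * stdNormalPDF d1 = K * B * stdNormalPDF d2 := by
    unfold stdNormalPDF
    have hdiff : d1 ^ 2 - d2 ^ 2 = 2 * (Real.log (s / K) + (R - δ) * τ) := by
      rw [hd1def, hd2def]
      unfold bsD1 bsD2
      rw [div_pow, div_pow, ← hcdef, div_sub_div_same]
      rw [div_eq_iff (by positivity : c ^ 2 ≠ 0), hc2]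
      ring
    have hL : Real.log (s / K) = Real.log s - Real.log K := Real.log_div hs.ne' hK.ne'
    have : s * A * Real.exp (-(d1 ^ 2) / 2) = K * B * Real.exp (-(d2 ^ 2) / 2) := by
      rw [hA, hB, ← Real.exp_log hs, ← Real.exp_log hK,
        ← Real.exp_add, ← Real.exp_add, ← Real.exp_add, ← Real.exp_add]
      congr 1
      have : d1 ^ 2 = d2 ^ 2 + 2 * (Real.log s - Real.log K + (R - δ) * τ) := by
        rw [← hL]; linarith [hdiff]
      rw [this]; ring
    calc s * A * ((Real.sqrt (2 * Real.pi))⁻¹ * Real.exp (-(d1 ^ 2) / 2))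
        = (Real.sqrt (2 * Real.pi))⁻¹ * (s * A * Real.exp (-(d1 ^ 2) / 2)) := by ring
      _ = (Real.sqrt (2 * Real.pi))⁻¹ * (K * B * Real.exp (-(d2 ^ 2) / 2)) := by rw [this]
      _ = K * B * ((Real.sqrt (2 * Real.pi))⁻¹ * Real.exp (-(d2 ^ 2) / 2)) := by ring
  have hderiv_eq : A * stdNormalCDF d1 + s * A * (stdNormalPDF d1 * (s⁻¹ / c))
      - K * B * (stdNormalPDF d2 * (s⁻¹ / c)) = A * stdNormalCDF d1 := by
    have : s * A * (stdNormalPDF d1 * (s⁻¹ / c)) = K * B * (stdNormalPDF d2 * (s⁻¹ / c)) := by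
      rw [show s * A * (stdNormalPDF d1 * (s⁻¹ / c)) = s * A * stdNormalPDF d1 * (s⁻¹ / c) by ring,
        hkey]; ring
    linarith
  rw [← hderiv_eq]
  exact htotal
end
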